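/- Let x = u v u be a string of length m, where u, v ∈ Σ* and u is a border of x (i.e., u is both a proper prefix and a suffix of x). Then for every position i with 0 ≤ i < |u| such that suff[i] ≤ i, it holds that good-suff[m-1-suff[i]] < m-1-i. -/

import Mathlib

/-- `suffT x i` is the length of the longest common suffix of `x` and `x[0..i]`,
i.e. the largest `k` with `0 ≤ k ≤ i+1` such that `x[i-k+1..i] = x[m-k..m-1]`. -/
def suffT {α : Type*} [DecidableEq α] (x : List α) (i : ℕ) : ℕ :=
  Nat.findGreatest
    (fun k => (x.take (i + 1)).drop (i + 1 - k) = x.drop (x.length - k)) (i + 1)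

/-- `Cond-suf(i,d)`: either `0 < d ≤ i+1` and `x[i-d+1..m-d-1]` is a suffix of `x`,
or `i+1 < d` and `x[0..m-d-1]` is a suffix of `x`. -/
def CondSuf {α : Type*} (x : List α) (i d : ℕ) : Prop :=
  (0 < d ∧ d ≤ i + 1 ∧ (x.drop (i + 1 - d)).take (x.length - 1 - i) <:+ x) ∨
  (i + 1 < d ∧ x.take (x.length - d) <:+ x)

/-- `Cond-occ(i,d)`: either `0 < d ≤ i` and `x[i-d] ≠ x[i]`, or `i < d`. -/
def CondOcc {α : Type*} (x : List α) (i d : ℕ) : Prop :=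
  (0 < d ∧ d ≤ i ∧ x[i - d]? ≠ x[i]?) ∨ i < d

/-- `goodSuff x i = min { d | Cond-suf(i,d) and Cond-occ(i,d) }`. -/
noncomputable def goodSuff {α : Type*} (x : List α) (i : ℕ) : ℕ :=
  sInf {d | CondSuf x i d ∧ CondOcc x i d}

/-- Let `x = u v u` where `u` is a border of `x` (`u ≠ x`).
Then for every position `i` with `0 ≤ i < |u|` such that `suff[i] ≤ i`,
`good-suff[m-1-suff[i]] < m-1-i`. -/
theorem statement11 {α : Type*} [DecidableEq α] (u v : List α)
    (x : List α) (hx : x = u ++ v ++ u) (hborder : u ≠ x)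
    (i : ℕ) (hi : i < u.length) (hs : suffT x i ≤ i) :
    goodSuff x (x.length - 1 - suffT x i) < x.length - 1 - i := by
  set s := suffT x i with hsdef
  set m := x.length with hmdef
  set L := u.length with hLdef
  set q := v.length with hqdef
  have hm : m = L + q + L := by rw [hmdef, hx]; simp; omega
  -- u is a proper prefix: L + q ≥ 1
  have hp1 : 1 ≤ L + q := by
    by_contra h
    have hu : u = [] := by rw [hLdef] at h; simpa using List.length_eq_zero_iff.mp (by omega)
    have hv : v = [] := by rw [hqdef] at h; simpa using List.length_eq_zero_iff.mp (by omega)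
    exact hborder (by rw [hx, hu, hv]; simp)
  -- periodicity
  have hper : ∀ k, k < L → x[k + (L + q)]? = x[k]? := by
    intro k hk
    rw [hx]
    rw [List.getElem?_append_right (by simp only [List.length_append]; omega)]
    rw [List.getElem?_append_left (by simp only [List.length_append]; omega)]
    rw [List.getElem?_append_left (by omega)]
    congr 1
    simp only [List.length_append]
    omega
  have hsle : s ≤ i + 1 := Nat.findGreatest_le _
  have hP : (x.take (i+1)).drop (i+1 - s) = x.drop (m - s) :=
    Nat.findGreatest_spec
      (P := fun k => (x.take (i + 1)).drop (i + 1 - k) = x.drop (x.length - k))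
      (Nat.zero_le (i+1))
      (by show (x.take (i+1)).drop (i+1-0) = x.drop (x.length - 0)
          rw [Nat.sub_zero, Nat.sub_zero, List.drop_length, List.drop_eq_nil_of_le (by simp)])
  have hpt : ∀ t, t < s → x[i+1-s+t]? = x[m-s+t]? := by
    intro t ht
    have h1 := congrArg (fun l => l[t]?) hP
    simp only [List.getElem?_drop] at h1
    rwa [List.getElem?_take_of_lt (by omega)] at h1
  -- i + 1 < L (otherwise suffT x i = i+1, contradiction)
  have hiL : i + 1 < L := by
    rcases Nat.lt_or_ge (i+1) L with h | h
    · exact h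
    · exfalso
      have hLi : L = i + 1 := by omega
      have hfull : (x.take (i+1)).drop (i+1 - (i+1)) = x.drop (x.length - (i+1)) := by
        rw [Nat.sub_self, List.drop_zero, hx]
        have h1 : (u ++ v ++ u).take (i+1) = u := by
          rw [List.append_assoc]; exact List.take_left' (by omega)
        have h2 : (u ++ v ++ u).drop ((u ++ v ++ u).length - (i+1)) = u := by
          rw [show (u ++ v ++ u).length - (i+1) = (u ++ v).length by
            simp [← hLdef, ← hqdef]; omega]
          exact List.drop_left
        rw [h1, h2]
      have h2 : i + 1 ≤ suffT x i := Nat.le_findGreatest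
        (P := fun k => (x.take (i + 1)).drop (i + 1 - k) = x.drop (x.length - k))
        (le_refl (i+1)) hfull
      omega
  -- mismatch character
  have hmis : x[i-s]? ≠ x[m-1-s]? := by
    have hgt : ¬ ((x.take (i+1)).drop (i+1 - (s+1)) = x.drop (x.length - (s+1))) :=
      Nat.findGreatest_is_greatest
        (P := fun k => (x.take (i + 1)).drop (i + 1 - k) = x.drop (x.length - k))
        (by change suffT x i < s + 1; omega) (by omega)
    intro heq
    apply hgt
    apply List.ext_getElem?
    intro t
    rcases t with _ | r
    · simp only [List.getElem?_drop, Nat.add_zero]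
      rw [List.getElem?_take_of_lt (by omega)]
      rw [show i + 1 - (s+1) = i - s by omega, show x.length - (s+1) = m - 1 - s by omega]
      exact heq
    · simp only [List.getElem?_drop]
      by_cases hr : r < s
      · rw [List.getElem?_take_of_lt (by omega)]
        rw [show i + 1 - (s+1) + (r+1) = i + 1 - s + r by omega,
            show x.length - (s+1) + (r+1) = m - s + r by omega]
        exact hpt r hr
      · rw [List.getElem?_eq_none (by simp; omega), List.getElem?_eq_none (by omega)]
  -- the witness shift
  have hcs : CondSuf x (m - 1 - s) (L - 1 - i) := by
    left
    refine ⟨by omega, by omega, ?_⟩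
    rw [show m - 1 - s + 1 - (L - 1 - i) = (L + q) + (i + 1 - s) by omega,
        show m - 1 - (m - 1 - s) = s by omega]
    have hEq : (x.drop ((L + q) + (i + 1 - s))).take s = x.drop (m - s) := by
      apply List.ext_getElem?
      intro t
      by_cases ht : t < s
      · rw [List.getElem?_take_of_lt ht, List.getElem?_drop, List.getElem?_drop]
        rw [show (L + q) + (i + 1 - s) + t = (i + 1 - s + t) + (L + q) by omega]
        exact (hper (i+1-s+t) (by omega)).trans
          (by rw [show m - s + t = x.length - s + t by rw [hmdef]] at *
              exact hpt t ht)
      · rw [List.getElem?_eq_none (by simp; omega), List.getElem?_eq_none (by simp; omega)]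
    rw [hEq]
    exact List.drop_suffix _ _
  have hco : CondOcc x (m - 1 - s) (L - 1 - i) := by
    left
    refine ⟨by omega, by omega, ?_⟩
    rw [show m - 1 - s - (L - 1 - i) = (i - s) + (L + q) by omega]
    rw [hper (i - s) (by omega)]
    exact hmis
  have hle : goodSuff x (m - 1 - s) ≤ L - 1 - i := Nat.sInf_le ⟨hcs, hco⟩
  omega
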